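/- For integers k ≥ 2, n ≥ 2k, and any two distinct elements a, b of {1,...,n}, the number of stable k-subsets F of {1,...,n} with {a,b} ⊆ F is at most C(n-k-2, k-2). -/

import Mathlib

open Finset

attribute [local instance] Classical.propDecidable

/-- `A` is a stable subset of `{1,...,n}`: no two cyclically consecutive elements. -/
def Stable (n : ℕ) (A : Finset ℕ) : Prop :=
  (∀ i ∈ A, i + 1 ∉ A) ∧ ¬(1 ∈ A ∧ n ∈ A)

/-- The collection of stable `k`-subsets of `{1,...,n}`. -/
noncomputable def stableSets (n k : ℕ) : Finset (Finset ℕ) :=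
  ((Finset.Icc 1 n).powersetCard k).filter (fun A => Stable n A)

def NoConsec (H : Finset ℕ) : Prop := ∀ x ∈ H, x + 1 ∉ H

lemma noConsec_subset {A B : Finset ℕ} (h : A ⊆ B) (hB : NoConsec B) : NoConsec A :=
  fun x hx hx1 => hB x (h hx) (h hx1)

lemma noconsec_count (s : ℕ) (hs : 1 ≤ s) :
    ∀ l j : ℕ, (((Finset.Ico s (s + l)).powersetCard j).filter NoConsec).card
      ≤ (l + 1 - j).choose j := by
  intro l
  induction l using Nat.strong_induction_on with
  | _ l IH =>
  intro j
  rcases Nat.eq_zero_or_pos j with hj0 | hj1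
  · subst hj0
    calc (((Finset.Ico s (s + l)).powersetCard 0).filter NoConsec).card
        ≤ ((Finset.Ico s (s + l)).powersetCard 0).card := card_filter_le _ _
      _ ≤ 1 := by simp [card_powersetCard]
      _ ≤ (l + 1 - 0).choose 0 := by simp
  by_cases hjl : l < j
  · have he : (Finset.Ico s (s + l)).powersetCard j = ∅ := by
      rw [Finset.powersetCard_eq_empty]
      simp [Nat.card_Ico]; omega
    rw [he]; simp
  push_neg at hjl
  by_cases hl1 : l = 1
  · have hj' : j = 1 := by omega
    subst hl1 hj'
    have h1 : (((Finset.Ico s (s + 1)).powersetCard 1).filter NoConsec).card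
        ≤ ((Finset.Ico s (s + 1)).powersetCard 1).card := card_filter_le _ _
    simpa [card_powersetCard, Nat.card_Ico] using h1
  set S := ((Finset.Ico s (s + l)).powersetCard j).filter NoConsec with hS
  set t := s + l - 1 with ht
  have hsplit := Finset.card_filter_add_card_filter_not
    (s := S) (p := fun H => t ∈ H)
  have hA : (S.filter (fun H => t ∉ H)).card
      ≤ (((Finset.Ico s (s + (l - 1))).powersetCard j).filter NoConsec).card := by
    apply Finset.card_le_card
    intro H hH
    simp only [hS, mem_filter, mem_powersetCard] at hH ⊢
    obtain ⟨⟨⟨hsub, hcard⟩, hnc⟩, htop⟩ := hH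
    refine ⟨⟨?_, hcard⟩, hnc⟩
    intro z hz
    have h1 := hsub hz
    simp only [mem_Ico] at h1 ⊢
    have h2 : z ≠ t := fun h => htop (h ▸ hz)
    omega
  have hB : (S.filter (fun H => t ∈ H)).card
      ≤ (((Finset.Ico s (s + (l - 2))).powersetCard (j - 1)).filter NoConsec).card := by
    apply Finset.card_le_card_of_injOn (fun H => H.erase t)
    · intro H hH
      simp only [hS, mem_coe, mem_filter, mem_powersetCard] at hH ⊢
      obtain ⟨⟨⟨hsub, hcard⟩, hnc⟩, htop⟩ := hH
      refine ⟨⟨?_, by rw [card_erase_of_mem htop, hcard]⟩,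
        noConsec_subset (erase_subset _ _) hnc⟩
      intro z hz
      rw [mem_erase] at hz
      obtain ⟨hzt, hzH⟩ := hz
      have h1 := hsub hzH
      simp only [mem_Ico] at h1 ⊢
      have h2 : z ≠ s + l - 2 := by
        intro h
        have h3 : z + 1 = t := by omega
        exact hnc z hzH (h3 ▸ htop)
      omega
    · intro H1 h1 H2 h2 he
      simp only [coe_filter, Set.mem_setOf_eq] at h1 h2
      have he' : H1.erase t = H2.erase t := he
      rw [← insert_erase h1.2, ← insert_erase h2.2, he']
  have e1 := IH (l - 1) (by omega) j
  have e2 := IH (l - 2) (by omega) (j - 1)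
  have r1 : (l - 1) + 1 - j = l - j := by omega
  have r2 : (l - 2) + 1 - (j - 1) = l - j := by omega
  rw [r1] at e1; rw [r2] at e2
  have hpas : (l + 1 - j).choose j = (l - j).choose (j - 1) + (l - j).choose j := by
    obtain ⟨m, rfl⟩ : ∃ m, j = m + 1 := ⟨j - 1, by omega⟩
    have h1 : l + 1 - (m + 1) = (l - (m + 1)) + 1 := by omega
    rw [h1, Nat.choose_succ_succ, Nat.add_sub_cancel]
  omega

def rho (a n x : ℕ) : ℕ := if x < a then x + n + 1 - a else x + 1 - a
lemma rho_self (a n : ℕ) : rho a n a = 1 := by unfold rho; simp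
lemma rho_mem {a n x : ℕ} (ha1 : 1 ≤ a) (ha2 : a ≤ n) (hx1 : 1 ≤ x) (hx2 : x ≤ n) :
    1 ≤ rho a n x ∧ rho a n x ≤ n := by unfold rho; split_ifs <;> omega
lemma rho_inj {a n x y : ℕ} (ha1 : 1 ≤ a) (ha2 : a ≤ n) (hx1 : 1 ≤ x) (hx2 : x ≤ n)
    (hy1 : 1 ≤ y) (hy2 : y ≤ n) (h : rho a n x = rho a n y) : x = y := by
  unfold rho at h; split_ifs at h <;> omega
lemma rho_adj {a n x y : ℕ} (ha1 : 1 ≤ a) (ha2 : a ≤ n) (hx1 : 1 ≤ x) (hx2 : x ≤ n)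
    (hy1 : 1 ≤ y) (hy2 : y ≤ n)
    (h : rho a n y = rho a n x + 1 ∨ (rho a n x = n ∧ rho a n y = 1)) :
    y = x + 1 ∨ (x = n ∧ y = 1) := by
  unfold rho at h; split_ifs at h <;> omega
lemma stable_key {a n : ℕ} (ha1 : 1 ≤ a) (ha2 : a ≤ n) {F : Finset ℕ}
    (hF : F ⊆ Finset.Icc 1 n) (hs : Stable n F) {x y : ℕ} (hx : x ∈ F) (hy : y ∈ F) :
    ¬(rho a n y = rho a n x + 1 ∨ (rho a n x = n ∧ rho a n y = 1)) := by
  intro h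
  have hx' := mem_Icc.mp (hF hx)
  have hy' := mem_Icc.mp (hF hy)
  rcases rho_adj ha1 ha2 hx'.1 hx'.2 hy'.1 hy'.2 h with h1 | ⟨h1, h2⟩
  · exact hs.1 x hx (h1 ▸ hy)
  · exact hs.2 ⟨h2 ▸ hy, h1 ▸ hx⟩

lemma main_facts {n k a b : ℕ} (ha1 : 1 ≤ a) (ha2 : a ≤ n) (hb1 : 1 ≤ b) (hb2 : b ≤ n)
    (hab : a ≠ b) (hn : 5 ≤ n) {F : Finset ℕ} (hFs : F ⊆ Finset.Icc 1 n)
    (hFc : F.card = k) (hst : Stable n F) (haF : a ∈ F) (hbF : b ∈ F) :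
    (3 ≤ rho a n b ∧ rho a n b ≤ n - 1) ∧
    (∀ z ∈ ((F.image (rho a n)).erase 1).erase (rho a n b),
      3 ≤ z ∧ z ≤ n - 1 ∧ z ≠ rho a n b - 1 ∧ z ≠ rho a n b ∧ z ≠ rho a n b + 1) ∧
    NoConsec (((F.image (rho a n)).erase 1).erase (rho a n b)) ∧
    (((F.image (rho a n)).erase 1).erase (rho a n b)).card = k - 2 ∧
    F.image (rho a n) = insert 1 (insert (rho a n b) (((F.image (rho a n)).erase 1).erase (rho a n b))) := by
  have hmem : ∀ x ∈ F, 1 ≤ x ∧ x ≤ n := fun x hx => mem_Icc.mp (hFs hx)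
  have key : ∀ x ∈ F, ∀ y ∈ F,
      ¬(rho a n y = rho a n x + 1 ∨ (rho a n x = n ∧ rho a n y = 1)) :=
    fun x hx y hy => stable_key ha1 ha2 hFs hst hx hy
  have h1F : (1 : ℕ) ∈ F.image (rho a n) := by
    rw [← rho_self a n]; exact mem_image_of_mem _ haF
  have hbF' : rho a n b ∈ F.image (rho a n) := mem_image_of_mem _ hbF
  have hb'r := rho_mem (x := b) ha1 ha2 hb1 hb2
  have hb'1 : rho a n b ≠ 1 := by
    intro h
    exact hab (rho_inj ha1 ha2 ha1 ha2 hb1 hb2 (by rw [rho_self, h]))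
  have hb'2 : rho a n b ≠ 2 := by
    intro h
    exact key a haF b hbF (Or.inl (by rw [rho_self, h]))
  have hb'n : rho a n b ≠ n := by
    intro h
    exact key b hbF a haF (Or.inr ⟨h, rho_self a n⟩)
  have hb'bounds : 3 ≤ rho a n b ∧ rho a n b ≤ n - 1 := ⟨by omega, by omega⟩
  -- element facts
  have hGmem : ∀ z ∈ ((F.image (rho a n)).erase 1).erase (rho a n b),
      3 ≤ z ∧ z ≤ n - 1 ∧ z ≠ rho a n b - 1 ∧ z ≠ rho a n b ∧ z ≠ rho a n b + 1 := by
    intro z hz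
    rw [mem_erase, mem_erase] at hz
    obtain ⟨hzb, hz1, hzF⟩ := hz
    obtain ⟨x, hxF, hxz⟩ := mem_image.mp hzF
    obtain ⟨hx1, hx2⟩ := hmem x hxF
    have hzr := rho_mem (x := x) ha1 ha2 hx1 hx2
    rw [hxz] at hzr
    have hz2 : z ≠ 2 := by
      intro h
      exact key a haF x hxF (Or.inl (by rw [rho_self, hxz, h]))
    have hzn : z ≠ n := by
      intro h
      exact key x hxF a haF (Or.inr ⟨by rw [hxz, h], rho_self a n⟩)
    have hzbm : z ≠ rho a n b - 1 := by
      intro h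
      exact key x hxF b hbF (Or.inl (by rw [hxz]; omega))
    have hzbp : z ≠ rho a n b + 1 := by
      intro h
      exact key b hbF x hxF (Or.inl (by rw [hxz, h]))
    exact ⟨by omega, by omega, hzbm, hzb, hzbp⟩
  refine ⟨hb'bounds, hGmem, ?_, ?_, ?_⟩
  · -- NoConsec
    intro z hz hz1
    have hzF : z ∈ F.image (rho a n) := mem_of_mem_erase (mem_of_mem_erase hz)
    have hz1F : z + 1 ∈ F.image (rho a n) := mem_of_mem_erase (mem_of_mem_erase hz1)
    obtain ⟨x, hxF, hxz⟩ := mem_image.mp hzF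
    obtain ⟨y, hyF, hyz⟩ := mem_image.mp hz1F
    exact key x hxF y hyF (Or.inl (by rw [hxz, hyz]))
  · -- card
    have himg : (F.image (rho a n)).card = k := by
      rw [Finset.card_image_of_injOn, hFc]
      intro x hx y hy h
      have hx' := hmem x (mem_coe.mp hx)
      have hy' := hmem y (mem_coe.mp hy)
      exact rho_inj ha1 ha2 hx'.1 hx'.2 hy'.1 hy'.2 h
    rw [card_erase_of_mem (mem_erase.mpr ⟨hb'1, hbF'⟩), card_erase_of_mem h1F, himg]
    omega
  · rw [insert_erase (mem_erase.mpr ⟨hb'1, hbF'⟩), insert_erase h1F]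

lemma image_cancel {f : ℕ → ℕ} {P : ℕ → Prop}
    (hf : ∀ x, P x → ∀ y, P y → f x = f y → x = y)
    {A B : Finset ℕ} (hA : ∀ x ∈ A, P x) (hB : ∀ x ∈ B, P x)
    (h : A.image f = B.image f) : A = B := by
  ext z
  constructor <;> intro hz
  · have h1 : f z ∈ B.image f := h ▸ mem_image_of_mem f hz
    obtain ⟨w, hw, hfw⟩ := mem_image.mp h1
    exact (hf w (hB w hw) z (hA z hz) hfw) ▸ hw
  · have h1 : f z ∈ A.image f := h.symm ▸ mem_image_of_mem f hz
    obtain ⟨w, hw, hfw⟩ := mem_image.mp h1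
    exact (hf w (hA w hw) z (hB z hz) hfw) ▸ hw

theorem stmt_4 (n k : ℕ) (hk : 2 ≤ k) (hn : 2 * k ≤ n) (a b : ℕ)
    (ha : a ∈ Finset.Icc 1 n) (hb : b ∈ Finset.Icc 1 n) (hab : a ≠ b) :
    ((stableSets n k).filter (fun F => a ∈ F ∧ b ∈ F)).card
      ≤ Nat.choose (n - k - 2) (k - 2) := by
  classical
  rw [mem_Icc] at ha hb
  obtain ⟨ha1, ha2⟩ := ha
  obtain ⟨hb1, hb2⟩ := hb
  have hmemfam : ∀ F ∈ (stableSets n k).filter (fun F => a ∈ F ∧ b ∈ F),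
      F ⊆ Finset.Icc 1 n ∧ F.card = k ∧ Stable n F ∧ a ∈ F ∧ b ∈ F := by
    intro F hF
    simp only [stableSets, mem_filter, mem_powersetCard] at hF
    exact ⟨hF.1.1.1, hF.1.1.2, hF.1.2, hF.2.1, hF.2.2⟩
  by_cases hn5 : n < 5
  · -- n = 4, k = 2
    have hk2 : k = 2 := by omega
    have hcard1 : ((stableSets n k).filter (fun F => a ∈ F ∧ b ∈ F)).card ≤ 1 := by
      apply Finset.card_le_one.mpr
      intro F1 h1 F2 h2
      obtain ⟨_, hc1, _, haF1, hbF1⟩ := hmemfam F1 h1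
      obtain ⟨_, hc2, _, haF2, hbF2⟩ := hmemfam F2 h2
      have hsub1 : ({a, b} : Finset ℕ) ⊆ F1 := by
        intro z hz
        rcases mem_insert.mp hz with rfl | hz
        · exact haF1
        · rw [mem_singleton.mp hz]; exact hbF1
      have hsub2 : ({a, b} : Finset ℕ) ⊆ F2 := by
        intro z hz
        rcases mem_insert.mp hz with rfl | hz
        · exact haF2
        · rw [mem_singleton.mp hz]; exact hbF2
      have e1 := Finset.eq_of_subset_of_card_le hsub1 (by rw [hc1, hk2, card_pair hab])
      have e2 := Finset.eq_of_subset_of_card_le hsub2 (by rw [hc2, hk2, card_pair hab])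
      rw [← e1, ← e2]
    calc ((stableSets n k).filter (fun F => a ∈ F ∧ b ∈ F)).card ≤ 1 := hcard1
      _ ≤ (n - k - 2).choose (k - 2) := by rw [hk2]; simp
  push_neg at hn5
  -- main case
  have hstep : ((stableSets n k).filter (fun F => a ∈ F ∧ b ∈ F)).card
      ≤ (((Finset.Ico 3 (3 + (n - 5))).powersetCard (k - 2)).filter NoConsec).card := by
    apply Finset.card_le_card_of_injOn
      (fun F => (((F.image (rho a n)).erase 1).erase (rho a n b)).image
        (fun x => if x < rho a n b then x else x - 2))
    · -- maps to
      intro F hF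
      obtain ⟨hFs, hFc, hst, haF, hbF⟩ := hmemfam F hF
      obtain ⟨hb'b, hGm, hGnc, hGc, _⟩ :=
        main_facts ha1 ha2 hb1 hb2 hab hn5 hFs hFc hst haF hbF
      rw [mem_coe, mem_filter, mem_powersetCard]
      refine ⟨⟨?_, ?_⟩, ?_⟩
      · -- subset
        intro z hz
        obtain ⟨u, huG, hu⟩ := mem_image.mp hz
        obtain ⟨hu3, hun, hubm, hub, hubp⟩ := hGm u huG
        rw [mem_Ico]
        constructor
        · split_ifs at hu <;> omega
        · split_ifs at hu <;> omega
      · -- card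
        rw [Finset.card_image_of_injOn, hGc]
        intro u hu v hv h
        obtain ⟨hu3, hun, hubm, hub, hubp⟩ := hGm u (mem_coe.mp hu)
        obtain ⟨hv3, hvn, hvbm, hvb, hvbp⟩ := hGm v (mem_coe.mp hv)
        simp only at h
        split_ifs at h <;> omega
      · -- NoConsec
        intro z hz hz1
        obtain ⟨u, huG, hu⟩ := mem_image.mp hz
        obtain ⟨v, hvG, hv⟩ := mem_image.mp hz1
        obtain ⟨hu3, hun, hubm, hub, hubp⟩ := hGm u huG
        obtain ⟨hv3, hvn, hvbm, hvb, hvbp⟩ := hGm v hvG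
        have hne : v ≠ u + 1 := fun h => hGnc u huG (h ▸ hvG)
        split_ifs at hu hv <;> omega
    · -- injective
      intro F1 hF1 F2 hF2 heq
      simp only [mem_coe] at hF1 hF2
      obtain ⟨hFs1, hFc1, hst1, haF1, hbF1⟩ := hmemfam F1 hF1
      obtain ⟨hFs2, hFc2, hst2, haF2, hbF2⟩ := hmemfam F2 hF2
      obtain ⟨hb'b, hGm1, _, _, hrec1⟩ :=
        main_facts ha1 ha2 hb1 hb2 hab hn5 hFs1 hFc1 hst1 haF1 hbF1
      obtain ⟨_, hGm2, _, _, hrec2⟩ :=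
        main_facts ha1 ha2 hb1 hb2 hab hn5 hFs2 hFc2 hst2 haF2 hbF2
      simp only at heq
      have hG : ((F1.image (rho a n)).erase 1).erase (rho a n b)
          = ((F2.image (rho a n)).erase 1).erase (rho a n b) := by
        apply image_cancel (P := fun z => 3 ≤ z ∧ z ≤ n - 1 ∧ z ≠ rho a n b - 1
            ∧ z ≠ rho a n b ∧ z ≠ rho a n b + 1) ?_ hGm1 hGm2 heq
        intro x hx y hy h
        obtain ⟨hx3, hxn, hxbm, hxb, hxbp⟩ := hx
        obtain ⟨hy3, hyn, hybm, hyb, hybp⟩ := hy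
        split_ifs at h <;> omega
      have hF' : F1.image (rho a n) = F2.image (rho a n) := by
        rw [hrec1, hrec2, hG]
      apply image_cancel (P := fun x => 1 ≤ x ∧ x ≤ n)
        (fun x hx y hy h => rho_inj ha1 ha2 hx.1 hx.2 hy.1 hy.2 h)
        (fun x hx => mem_Icc.mp (hFs1 hx)) (fun x hx => mem_Icc.mp (hFs2 hx)) hF'
  calc ((stableSets n k).filter (fun F => a ∈ F ∧ b ∈ F)).card
      ≤ (((Finset.Ico 3 (3 + (n - 5))).powersetCard (k - 2)).filter NoConsec).card := hstep
    _ ≤ ((n - 5) + 1 - (k - 2)).choose (k - 2) := noconsec_count 3 (by norm_num) (n - 5) (k - 2)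
    _ = (n - k - 2).choose (k - 2) := by
        congr 1
        omega
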